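/- Isogonal conjugate reflection lemma (triangle case): Let P be a point inside triangle ABC with isogonal conjugate Q (∠PAB = ∠QAC, ∠PBC = ∠QBA, ∠PCA = ∠QCB). Then the reflections of P over the three side-lines BC, CA, AB lie on a common circle centered at Q. -/

import Mathlib

open EuclideanGeometry

open InnerProductGeometry
local notation "angle" => InnerProductGeometry.angle

noncomputable section
namespace IsoRef

abbrev Pt := EuclideanSpace ℝ (Fin 2)

def ip (x y : Pt) : ℝ := x 0 * y 0 + x 1 * y 1
def crs (x y : Pt) : ℝ := x 0 * y 1 - x 1 * y 0

lemma inner_eq (x y : Pt) : (inner ℝ x y : ℝ) = ip x y := by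
  simp [ip, PiLp.inner_apply, Fin.sum_univ_two, RCLike.inner_apply, mul_comm]

lemma norm_sq (x : Pt) : ‖x‖ ^ 2 = ip x x := by
  rw [← real_inner_self_eq_norm_sq, inner_eq]

lemma cs_id (x y : Pt) : ip x x * ip y y - ip x y * ip x y = crs x y ^ 2 := by
  simp [ip, crs]; ring

lemma sin_angle_eq (x y : Pt) :
    Real.sin (angle x y) * (‖x‖ * ‖y‖) = |crs x y| := by
  rw [InnerProductGeometry.sin_angle_mul_norm_mul_norm, inner_eq, inner_eq, inner_eq,
    show ip x x * ip y y - ip x y * ip x y = crs x y ^ 2 from cs_id x y]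
  exact Real.sqrt_sq_eq_abs _

lemma cos_angle_eq (x y : Pt) :
    Real.cos (angle x y) * (‖x‖ * ‖y‖) = ip x y := by
  rw [InnerProductGeometry.cos_angle_mul_norm_mul_norm, inner_eq]

-- from angle equality, get the two scalar equalities
lemma cos_sin_of_angle_eq {x y z w : Pt} (h : angle x y = angle z w) :
    ip x y * (‖z‖ * ‖w‖) = ip z w * (‖x‖ * ‖y‖) ∧
    |crs x y| * (‖z‖ * ‖w‖) = |crs z w| * (‖x‖ * ‖y‖) := by
  constructor
  · rw [← cos_angle_eq, ← cos_angle_eq, h]; ring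
  · rw [← sin_angle_eq, ← sin_angle_eq, h]; ring

end IsoRef

namespace IsoRef
open Real

lemma angle_lt_of_cos_lt {x y z w : Pt} (h : Real.cos (angle z w) < Real.cos (angle x y)) :
    angle x y < angle z w := by
  by_contra hle
  push_neg at hle
  have h2 := (Real.strictAntiOn_cos.antitoneOn) ⟨InnerProductGeometry.angle_nonneg z w, InnerProductGeometry.angle_le_pi z w⟩
    ⟨InnerProductGeometry.angle_nonneg x y, InnerProductGeometry.angle_le_pi x y⟩ hle
  linarith

lemma core_bounds {nu nv t : ℝ} (hCS : t ^ 2 < nu ^ 2 * nv ^ 2) (hnu : 0 < nu) (hnv : 0 < nv) :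
    -(nu * nv) < t ∧ t < nu * nv := by
  constructor <;> nlinarith [sq_nonneg (t + nu * nv), sq_nonneg (t - nu * nv), mul_pos hnu hnv]

lemma core1 {nu nv nw t a b : ℝ} (hnu : 0 < nu) (hnv : 0 < nv) (hnw : 0 < nw)
    (ha : 0 < a) (hb : 0 < b) (hw2 : nw ^ 2 = a ^ 2 * nu ^ 2 + 2 * a * b * t + b ^ 2 * nv ^ 2)
    (hCS : t ^ 2 < nu ^ 2 * nv ^ 2) : t * nw < (a * nu ^ 2 + b * t) * nv := by
  obtain ⟨ht2, ht1⟩ := core_bounds hCS hnu hnv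
  rcases le_or_gt t 0 with h | h
  · have hs : b * nv - a * nu < nw := by nlinarith [mul_pos ha hb]
    have h1 : t * nw ≤ t * (b * nv - a * nu) := by nlinarith
    nlinarith [mul_pos (mul_pos ha hnu) (show (0:ℝ) < t + nu * nv by linarith)]
  · have hs : nw < a * nu + b * nv := by nlinarith [mul_pos ha hb, show (0:ℝ) < nw + (a * nu + b * nv) by positivity]
    have h1 : t * nw < t * (a * nu + b * nv) := by nlinarith
    nlinarith [mul_pos (mul_pos ha hnu) (show (0:ℝ) < nu * nv - t by linarith)]

lemma core2 {nu nv nw t z x : ℝ} (hnu : 0 < nu) (hnv : 0 < nv) (hnw : 0 < nw)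
    (hz : 0 < z) (hx : x < 0) (hw2 : nw ^ 2 = z ^ 2 * nu ^ 2 + 2 * z * x * t + x ^ 2 * nv ^ 2)
    (hCS : t ^ 2 < nu ^ 2 * nv ^ 2) : (z * t + x * nv ^ 2) * nu < t * nw := by
  obtain ⟨ht2, ht1⟩ := core_bounds hCS hnu hnv
  rcases le_or_gt 0 t with h | h
  · have hs : z * nu + x * nv < nw := by nlinarith [mul_pos hz (neg_pos.mpr hx)]
    have h1 : t * (z * nu + x * nv) ≤ t * nw := by nlinarith
    nlinarith [mul_pos (mul_pos (neg_pos.mpr hx) hnv) (show (0:ℝ) < nu * nv - t by linarith)]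
  · have hs : nw < z * nu - x * nv := by nlinarith [mul_pos hz (neg_pos.mpr hx), show (0:ℝ) < nw + (z * nu - x * nv) by nlinarith]
    have h1 : t * (z * nu - x * nv) < t * nw := by nlinarith
    nlinarith [mul_pos (mul_pos (neg_pos.mpr hx) hnv) (show (0:ℝ) < nu * nv + t by linarith)]

end IsoRef

namespace IsoRef

@[simp] lemma comb_apply (a b : ℝ) (x y : Pt) (i : Fin 2) :
    (a • x + b • y) i = a * x i + b * y i := rfl

lemma crs_zero_left (y : Pt) : crs 0 y = 0 := by simp [crs]

lemma crs_comb_left (a b : ℝ) (x y z : Pt) :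
    crs (a • x + b • y) z = a * crs x z + b * crs y z := by simp [crs]; ring

lemma ip_comb_left (a b : ℝ) (x y z : Pt) :
    ip (a • x + b • y) z = a * ip x z + b * ip y z := by simp [ip]; ring

lemma ip_comm (x y : Pt) : ip x y = ip y x := by simp [ip]; ring

lemma crs_ne_left {x y : Pt} (h : crs x y ≠ 0) : x ≠ 0 := by
  rintro rfl; exact h (crs_zero_left y)

lemma crs_ne_right {x y : Pt} (h : crs x y ≠ 0) : y ≠ 0 := by
  rintro rfl; simp [crs] at h

lemma cs_lt {u v : Pt} (h : crs u v ≠ 0) : (ip u v) ^ 2 < ‖u‖ ^ 2 * ‖v‖ ^ 2 := by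
  have h1 := cs_id u v
  have h2 : (0:ℝ) < crs u v ^ 2 := by positivity
  rw [norm_sq, norm_sq]
  nlinarith

lemma L1 {u v : Pt} (h : crs u v ≠ 0) {a b : ℝ} (ha : 0 < a) (hb : 0 < b) :
    angle (a • u + b • v) u < angle v u := by
  have hu : u ≠ 0 := crs_ne_left h
  have hv : v ≠ 0 := crs_ne_right h
  have hwc : crs (a • u + b • v) v = a * crs u v := by
    rw [crs_comb_left]; have : crs v v = 0 := by simp [crs]; ring
    rw [this]; ring
  have hw : a • u + b • v ≠ 0 := by
    intro h0
    rw [h0, crs_zero_left] at hwc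
    rcases mul_eq_zero.mp hwc.symm with h' | h'
    · exact ha.ne' h'
    · exact h h'
  have hnu : 0 < ‖u‖ := norm_pos_iff.mpr hu
  have hnv : 0 < ‖v‖ := norm_pos_iff.mpr hv
  have hnw : 0 < ‖a • u + b • v‖ := norm_pos_iff.mpr hw
  apply angle_lt_of_cos_lt
  rw [InnerProductGeometry.cos_angle, InnerProductGeometry.cos_angle, inner_eq, inner_eq, div_lt_div_iff₀ (by positivity) (by positivity)]
  have hw2 : ‖a • u + b • v‖ ^ 2 = a ^ 2 * ‖u‖ ^ 2 + 2 * a * b * ip u v + b ^ 2 * ‖v‖ ^ 2 := by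
    rw [norm_sq, norm_sq, norm_sq]; simp [ip]; ring
  have key := core1 hnu hnv hnw ha hb hw2 (cs_lt h)
  have hwu : ip (a • u + b • v) u = a * ‖u‖ ^ 2 + b * ip u v := by
    rw [ip_comb_left, norm_sq, ip_comm v u]
  have hvu : ip v u = ip u v := ip_comm v u
  rw [hwu, hvu]
  nlinarith [key]

lemma L2 {u v : Pt} (h : crs u v ≠ 0) {z x : ℝ} (hz : 0 < z) (hx : x < 0) :
    angle u v < angle (z • u + x • v) v := by
  have hu : u ≠ 0 := crs_ne_left h
  have hv : v ≠ 0 := crs_ne_right h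
  have hwc : crs (z • u + x • v) v = z * crs u v := by
    rw [crs_comb_left]; have : crs v v = 0 := by simp [crs]; ring
    rw [this]; ring
  have hw : z • u + x • v ≠ 0 := by
    intro h0
    rw [h0, crs_zero_left] at hwc
    rcases mul_eq_zero.mp hwc.symm with h' | h'
    · exact hz.ne' h'
    · exact h h'
  have hnu : 0 < ‖u‖ := norm_pos_iff.mpr hu
  have hnv : 0 < ‖v‖ := norm_pos_iff.mpr hv
  have hnw : 0 < ‖z • u + x • v‖ := norm_pos_iff.mpr hw
  apply angle_lt_of_cos_lt
  rw [InnerProductGeometry.cos_angle, InnerProductGeometry.cos_angle, inner_eq, inner_eq, div_lt_div_iff₀ (by positivity) (by positivity)]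
  have hw2 : ‖z • u + x • v‖ ^ 2 = z ^ 2 * ‖u‖ ^ 2 + 2 * z * x * ip u v + x ^ 2 * ‖v‖ ^ 2 := by
    rw [norm_sq, norm_sq, norm_sq]; simp [ip]; ring
  have key := core2 hnu hnv hnw hz hx hw2 (cs_lt h)
  have hwv : ip (z • u + x • v) v = z * ip u v + x * ‖v‖ ^ 2 := by
    rw [ip_comb_left, norm_sq]
  rw [hwv]
  nlinarith [key]

end IsoRef

namespace IsoRef

lemma bary_of_interior {A B C P : Pt} (hABC : AffineIndependent ℝ ![A, B, C])
    (hPin : P ∈ interior (convexHull ℝ ({A, B, C} : Set Pt))) :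
    ∃ α β γ : ℝ, 0 < α ∧ 0 < β ∧ 0 < γ ∧ α + β + γ = 1 ∧ P = α • A + β • B + γ • C := by
  have hrange : Set.range ![A, B, C] = ({A, B, C} : Set Pt) := by
    ext x; simp [Matrix.range_cons, Matrix.range_empty]; tauto
  have htop : affineSpan ℝ (Set.range ![A, B, C]) = ⊤ := by
    rw [hABC.affineSpan_eq_top_iff_card_eq_finrank_add_one]
    simp [finrank_euclideanSpace_fin]
  let b : AffineBasis (Fin 3) ℝ Pt := ⟨![A, B, C], hABC, htop⟩
  have hb : ∀ i, b i = ![A, B, C] i := fun i => rfl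
  have hpos : ∀ i, 0 < b.coord i P := by
    have := b.interior_convexHull ▸ (by rwa [show Set.range b = ({A, B, C} : Set Pt) from hrange] : P ∈ interior (convexHull ℝ (Set.range b)))
    exact this
  refine ⟨b.coord 0 P, b.coord 1 P, b.coord 2 P, hpos 0, hpos 1, hpos 2, ?_, ?_⟩
  · have := b.sum_coord_apply_eq_one P
    rwa [Fin.sum_univ_three] at this
  · have := b.linear_combination_coord_eq_self P
    rw [Fin.sum_univ_three] at this
    exact this.symm

end IsoRef

namespace IsoRef

lemma D_ne {A B C : Pt} (hABC : AffineIndependent ℝ ![A, B, C]) :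
    crs (B - A) (C - A) ≠ 0 := by
  intro hD
  have hBA : B - A ≠ 0 := by
    intro h0
    have : B = A := by
      have := sub_eq_zero.mp h0; exact this
    exact (hABC.injective.ne (show (1 : Fin 3) ≠ 0 by decide)) (by simpa using this)
  have hbb : ip (B - A) (B - A) ≠ 0 := by
    have : (0:ℝ) < ‖B - A‖ ^ 2 := pow_pos (norm_pos_iff.mpr hBA) 2
    rw [norm_sq] at this; exact this.ne'
  have hC : C = (ip (C - A) (B - A) / ip (B - A) (B - A)) • (B - A) +ᵥ A := by
    have key : C - A = (ip (C - A) (B - A) / ip (B - A) (B - A)) • (B - A) := by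
      ext i
      fin_cases i
      · show (C - A) 0 = _ * (B - A) 0
        rw [div_mul_eq_mul_div, eq_div_iff hbb]
        simp only [ip, crs] at hD ⊢
        linear_combination (-((B - A) 1)) * hD
      · show (C - A) 1 = _ * (B - A) 1
        rw [div_mul_eq_mul_div, eq_div_iff hbb]
        simp only [ip, crs] at hD ⊢
        linear_combination ((B - A) 0) * hD
    have := key
    simp only [vadd_eq_add]
    rw [← this]; abel
  have hcol : Collinear ℝ ({A, B, C} : Set Pt) := by
    rw [collinear_iff_of_mem (Set.mem_insert A {B, C})]
    refine ⟨B - A, ?_⟩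
    intro p hp
    rcases hp with rfl | rfl | rfl
    · exact ⟨0, by simp⟩
    · exact ⟨1, by simp⟩
    · exact ⟨_, hC⟩
  refine (affineIndependent_iff_not_collinear.mp hABC) ?_
  have hr : Set.range ![A, B, C] = ({A, B, C} : Set Pt) := by
    ext x; simp [Matrix.range_cons, Matrix.range_empty]; tauto
  rw [hr]; exact hcol

end IsoRef

namespace IsoRef

@[simp] lemma sub_app (x y : Pt) (i : Fin 2) : (x - y) i = x i - y i := rfl
@[simp] lemma add_app (x y : Pt) (i : Fin 2) : (x + y) i = x i + y i := rfl
@[simp] lemma smul_app (a : ℝ) (x : Pt) (i : Fin 2) : (a • x) i = a * x i := rfl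

lemma angle_convert {P A B Q A' C : Pt} (h : EuclideanGeometry.angle P A B = EuclideanGeometry.angle Q A' C) :
    angle (P - A) (B - A) = angle (Q - A') (C - A') := by
  simpa [EuclideanGeometry.angle, vsub_eq_sub] using h

lemma div_mul_sq (a d : ℝ) (hd : d ≠ 0) : a / d * d ^ 2 = a * d := by
  field_simp

lemma sgn_pos {x d : ℝ} (hd : d ≠ 0) (h : 0 < x * d) : 0 < x / d := by
  have h1 := div_mul_sq x d hd
  have hd2 : (0:ℝ) < d ^ 2 := by positivity
  nlinarith

lemma sgn_neg {x d : ℝ} (hd : d ≠ 0) (h : x * d < 0) : x / d < 0 := by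
  have h1 := div_mul_sq x d hd
  have hd2 : (0:ℝ) < d ^ 2 := by positivity
  nlinarith

lemma sgn_pos3 {x y d : ℝ} (hd : d ≠ 0) (hx : x * d < 0) (hy : y * d < 0) :
    0 < (d - x - y) / d := by
  apply sgn_pos hd
  have hd2 : (0:ℝ) < d ^ 2 := by positivity
  nlinarith

lemma sign_master (A B C P Q : Pt) (hD : crs (B - A) (C - A) ≠ 0)
    {α β γ : ℝ} (hα : 0 < α) (hβ : 0 < β) (hγ : 0 < γ) (hsum : α + β + γ = 1)
    (hP : P = α • A + β • B + γ • C)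
    (hA : EuclideanGeometry.angle P A B = EuclideanGeometry.angle Q A C)
    (hB : EuclideanGeometry.angle P B C = EuclideanGeometry.angle Q B A)
    (hC : EuclideanGeometry.angle P C A = EuclideanGeometry.angle Q C B) :
    0 < crs (Q - A) (C - A) * crs (B - A) (C - A) := by
  have hβeq : β = 1 - α - γ := by linarith
  subst hβeq
  obtain ⟨D, hDdef⟩ : ∃ d : ℝ, crs (B - A) (C - A) = d := ⟨_, rfl⟩
  obtain ⟨X, hXdef⟩ : ∃ d : ℝ, crs (Q - C) (B - C) = d := ⟨_, rfl⟩
  obtain ⟨Y, hYdef⟩ : ∃ d : ℝ, crs (Q - A) (C - A) = d := ⟨_, rfl⟩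
  have hDcrs := hD
  rw [hDdef] at hD
  rw [hDdef, hYdef]
  have hβ : 0 < 1 - α - γ := hβ
  -- scalar identities
  have cCB_AB : crs (C - B) (A - B) = D := by rw [← hDdef]; simp only [crs, sub_app]; ring
  have cAC_BC : crs (A - C) (B - C) = D := by rw [← hDdef]; simp only [crs, sub_app]; ring
  have cPB_CB : crs (P - B) (C - B) = -(α * D) := by
    rw [← hDdef, hP]; simp only [crs, sub_app, add_app, smul_app]; ring
  have cPC_AC : crs (P - C) (A - C) = -((1 - α - γ) * D) := by
    rw [← hDdef, hP]; simp only [crs, sub_app, add_app, smul_app]; ring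
  have cPA_BA : crs (P - A) (B - A) = -(γ * D) := by
    rw [← hDdef, hP]; simp only [crs, sub_app, add_app, smul_app]; ring
  -- vector identities
  have hPBv : P - B = γ • (C - B) + α • (A - B) := by
    ext i; rw [hP]; simp only [sub_app, add_app, smul_app]; ring
  have hPCv : P - C = α • (A - C) + (1 - α - γ) • (B - C) := by
    ext i; rw [hP]; simp only [sub_app, add_app, smul_app]; ring
  -- angle conversions
  have hA' := angle_convert hA
  have hB' := angle_convert hB
  have hC' := angle_convert hC
  -- nonzero vectors
  have hBA : B - A ≠ 0 := crs_ne_left hDcrs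
  have hCA : C - A ≠ 0 := crs_ne_right hDcrs
  have hCB : C - B ≠ 0 := crs_ne_left (cCB_AB.trans_ne hD)
  have hAB : A - B ≠ 0 := crs_ne_right (cCB_AB.trans_ne hD)
  have hAC : A - C ≠ 0 := crs_ne_left (cAC_BC.trans_ne hD)
  have hBC : B - C ≠ 0 := crs_ne_right (cAC_BC.trans_ne hD)
  have hPA : P - A ≠ 0 := crs_ne_left (cPA_BA.trans_ne (by simpa using mul_ne_zero hγ.ne' hD))
  have hPB : P - B ≠ 0 := crs_ne_left (cPB_CB.trans_ne (by simpa using mul_ne_zero hα.ne' hD))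
  have hPC : P - C ≠ 0 := crs_ne_left (cPC_AC.trans_ne (by simpa using mul_ne_zero hβ.ne' hD))
  -- Q distinct from vertices
  have hQA : Q ≠ A := by
    rintro rfl
    have h0 : angle (P - B) (C - B) = 0 := by rw [hB']; exact InnerProductGeometry.angle_self (by simpa using hAB)
    obtain ⟨-, r, -, hr⟩ := InnerProductGeometry.angle_eq_zero_iff.mp h0
    have hz : crs (P - B) (C - B) = 0 := by rw [hr]; simp [crs]; ring
    rw [cPB_CB, neg_eq_zero] at hz
    exact mul_ne_zero hα.ne' hD hz
  have hQB : Q ≠ B := by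
    rintro rfl
    have h0 : angle (P - C) (A - C) = 0 := by rw [hC']; exact InnerProductGeometry.angle_self (by simpa using hBC)
    obtain ⟨-, r, -, hr⟩ := InnerProductGeometry.angle_eq_zero_iff.mp h0
    have hz : crs (P - C) (A - C) = 0 := by rw [hr]; simp [crs]; ring
    rw [cPC_AC, neg_eq_zero] at hz
    exact mul_ne_zero hβ.ne' hD hz
  have hQC : Q ≠ C := by
    rintro rfl
    have l1 := L1 (cCB_AB.trans_ne hD) hγ hα
    rw [← hPBv] at l1
    rw [hB', InnerProductGeometry.angle_comm] at l1
    exact lt_irrefl _ l1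
  -- norms
  have nQA : 0 < ‖Q - A‖ := norm_pos_iff.mpr (sub_ne_zero.mpr hQA)
  have nQC : 0 < ‖Q - C‖ := norm_pos_iff.mpr (sub_ne_zero.mpr hQC)
  have nPA : 0 < ‖P - A‖ := norm_pos_iff.mpr hPA
  have nPC : 0 < ‖P - C‖ := norm_pos_iff.mpr hPC
  have nBA : 0 < ‖B - A‖ := norm_pos_iff.mpr hBA
  have nCA : 0 < ‖C - A‖ := norm_pos_iff.mpr hCA
  have nBC : 0 < ‖B - C‖ := norm_pos_iff.mpr hBC
  have nAC : 0 < ‖A - C‖ := norm_pos_iff.mpr hAC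
  -- Y ≠ 0
  obtain ⟨cosA, sinA⟩ := cos_sin_of_angle_eq hA'
  have hY : Y ≠ 0 := by
    intro h0
    rw [hYdef, h0, abs_zero, zero_mul] at sinA
    have : 0 < |crs (P - A) (B - A)| * (‖Q - A‖ * ‖C - A‖) := by
      apply mul_pos (abs_pos.mpr (cPA_BA.trans_ne (by simpa using mul_ne_zero hγ.ne' hD)))
      exact mul_pos nQA nCA
    linarith
  -- X ≠ 0
  obtain ⟨cosC, sinC⟩ := cos_sin_of_angle_eq hC'
  have hX : X ≠ 0 := by
    intro h0
    rw [hXdef, h0, abs_zero, zero_mul] at sinC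
    have : 0 < |crs (P - C) (A - C)| * (‖Q - C‖ * ‖B - C‖) := by
      apply mul_pos (abs_pos.mpr (cPC_AC.trans_ne (by simpa using mul_ne_zero hβ.ne' hD)))
      exact mul_pos nQC nBC
    linarith
  have hD2 : 0 < D ^ 2 := by positivity
  -- main contradiction argument
  by_contra hcon
  push_neg at hcon
  have hYD : Y * D < 0 := lt_of_le_of_ne hcon (mul_ne_zero hY hD)
  rcases lt_or_gt_of_ne (mul_ne_zero hX hD) with hXD | hXD
  · -- bad at A and bad at C : contradiction at B
    have hrepB : Q - B = ((D - X - Y) / D) • (C - B) + (X / D) • (A - B) := by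
      ext i
      simp only [sub_app, add_app, smul_app, div_mul_eq_mul_div, ← add_div]
      rw [eq_div_iff hD]
      rw [← hXdef, ← hYdef, ← hDdef]
      fin_cases i <;> (simp only [Fin.mk_zero, Fin.mk_one, crs, sub_app]; ring)
    have hzz : 0 < (D - X - Y) / D := sgn_pos3 hD hXD hYD
    have hxx : X / D < 0 := sgn_neg hD hXD
    have l2 := L2 (cCB_AB.trans_ne hD) hzz hxx
    rw [← hrepB] at l2
    have l1 := L1 (cCB_AB.trans_ne hD) hγ hα
    rw [← hPBv] at l1
    rw [hB'] at l1
    rw [InnerProductGeometry.angle_comm (C - B) (A - B)] at l2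
    linarith
  · -- bad at A, good at C : contradiction at C
    have hrepC : Q - C = (X / D) • (A - C) + (Y / D) • (B - C) := by
      ext i
      simp only [sub_app, add_app, smul_app, div_mul_eq_mul_div, ← add_div]
      rw [eq_div_iff hD]
      rw [← hXdef, ← hYdef, ← hDdef]
      fin_cases i <;> (simp only [Fin.mk_zero, Fin.mk_one, crs, sub_app]; ring)
    have hxx : 0 < X / D := sgn_pos hD hXD
    have hyy : Y / D < 0 := sgn_neg hD hYD
    have l2 := L2 (cAC_BC.trans_ne hD) hxx hyy
    rw [← hrepC] at l2
    have l1 := L1 (cAC_BC.trans_ne hD) hα hβ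
    rw [← hPCv] at l1
    rw [hC'] at l1
    rw [InnerProductGeometry.angle_comm (A - C) (B - C)] at l2
    linarith

end IsoRef

namespace IsoRef

lemma dist_sq (x y : Pt) : dist x y ^ 2 = (x 0 - y 0) ^ 2 + (x 1 - y 1) ^ 2 := by
  rw [EuclideanSpace.dist_eq, Real.sq_sqrt (by positivity)]
  rw [Fin.sum_univ_two]
  simp [Real.dist_eq, sq_abs]

lemma dist_master (A B C P Q Pb Pc : Pt) (hD : crs (B - A) (C - A) ≠ 0)
    {α β γ : ℝ} (hα : 0 < α) (hβ : 0 < β) (hγ : 0 < γ) (hsum : α + β + γ = 1)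
    (hP : P = α • A + β • B + γ • C)
    (hA : EuclideanGeometry.angle P A B = EuclideanGeometry.angle Q A C)
    (hgood : 0 < crs (Q - A) (C - A) * crs (B - A) (C - A))
    (hPb : midpoint ℝ P Pb ∈ line[ℝ, C, A] ∧ inner ℝ (Pb - P) (A - C) = (0:ℝ))
    (hPc : midpoint ℝ P Pc ∈ line[ℝ, A, B] ∧ inner ℝ (Pc - P) (B - A) = (0:ℝ)) :
    dist Q Pb = dist Q Pc := by
  have hβeq : β = 1 - α - γ := by linarith
  subst hβeq
  -- basic nonzero facts
  have hBA : B - A ≠ 0 := crs_ne_left hD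
  have hCA : C - A ≠ 0 := crs_ne_right hD
  have cPA_BA : crs (P - A) (B - A) = -(γ * crs (B - A) (C - A)) := by
    rw [hP]; simp only [crs, sub_app, add_app, smul_app]; ring
  have hPAne : crs (P - A) (B - A) ≠ 0 := by
    rw [cPA_BA]; simpa using mul_ne_zero hγ.ne' hD
  have hPA : P - A ≠ 0 := crs_ne_left hPAne
  have hY : crs (Q - A) (C - A) ≠ 0 := by
    intro h0; rw [h0, zero_mul] at hgood; exact lt_irrefl _ hgood
  have hQA : Q - A ≠ 0 := crs_ne_left hY
  have nPA : 0 < ‖P - A‖ := norm_pos_iff.mpr hPA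
  have nQA : 0 < ‖Q - A‖ := norm_pos_iff.mpr hQA
  have nBA : 0 < ‖B - A‖ := norm_pos_iff.mpr hBA
  have nCA : 0 < ‖C - A‖ := norm_pos_iff.mpr hCA
  -- angle data
  obtain ⟨cosE, sinE⟩ := cos_sin_of_angle_eq (angle_convert hA)
  -- signed sine equality
  have E2 : crs (P - A) (B - A) * (‖Q - A‖ * ‖C - A‖)
      = -(crs (Q - A) (C - A) * (‖P - A‖ * ‖B - A‖)) := by
    rcases lt_or_gt_of_ne hD with hDneg | hDpos
    · have h1 : 0 < crs (P - A) (B - A) := by rw [cPA_BA]; nlinarith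
      have h2 : crs (Q - A) (C - A) < 0 := by nlinarith
      rw [abs_of_pos h1, abs_of_neg h2] at sinE
      linarith
    · have h1 : crs (P - A) (B - A) < 0 := by rw [cPA_BA]; nlinarith
      have h2 : 0 < crs (Q - A) (C - A) := by nlinarith
      rw [abs_of_neg h1, abs_of_pos h2] at sinE
      linarith
  -- bracket identity
  have hNP : (0:ℝ) < ‖P - A‖ * ‖B - A‖ := mul_pos nPA nBA
  have hbr : crs (P - A) (B - A) * ip (Q - A) (C - A)
      + crs (Q - A) (C - A) * ip (P - A) (B - A) = 0 := by
    have h2 : (crs (P - A) (B - A) * ip (Q - A) (C - A)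
        + crs (Q - A) (C - A) * ip (P - A) (B - A)) * (‖P - A‖ * ‖B - A‖) = 0 := by
      linear_combination (-(crs (P - A) (B - A))) * cosE + (ip (P - A) (B - A)) * E2
    rcases mul_eq_zero.mp h2 with h | h
    · exact h
    · exact absurd h hNP.ne'
  -- key identity
  have key : ip (P - A) (B - A) * ip (Q - A) (B - A) * ip (C - A) (C - A)
      = ip (P - A) (C - A) * ip (Q - A) (C - A) * ip (B - A) (B - A) := by
    simp only [ip, crs, sub_app] at hbr ⊢
    linear_combination (-((C 0 - A 0) * (B 1 - A 1) - (C 1 - A 1) * (B 0 - A 0))) * hbr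
  -- reflection formulas
  obtain ⟨hmb, hinnb⟩ := hPb
  rw [← vsub_vadd (midpoint ℝ P Pb) C] at hmb
  obtain ⟨t, ht⟩ := vadd_left_mem_affineSpan_pair.mp hmb
  have hPbv : ∀ i : Fin 2, Pb i = 2 * C i + 2 * t * (A i - C i) - P i := by
    intro i
    have h1 := congrArg (fun v : Pt => v i) ht
    have h2 : (midpoint ℝ P Pb) i = (2:ℝ)⁻¹ * (P i + Pb i) := by
      rw [midpoint_eq_smul_add]; simp; ring
    simp only [vsub_eq_sub, sub_app, smul_app] at h1
    rw [h2] at h1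
    field_simp at h1
    linarith
  rw [inner_eq] at hinnb
  have hTb : (1 - t) * ip (C - A) (C - A) = ip (P - A) (C - A) := by
    simp only [ip, sub_app] at hinnb ⊢
    rw [hPbv 0, hPbv 1] at hinnb
    linear_combination (-(1:ℝ)/2) * hinnb
  obtain ⟨hmc, hinnc⟩ := hPc
  rw [← vsub_vadd (midpoint ℝ P Pc) A] at hmc
  obtain ⟨s, hs⟩ := vadd_left_mem_affineSpan_pair.mp hmc
  have hPcv : ∀ i : Fin 2, Pc i = 2 * A i + 2 * s * (B i - A i) - P i := by
    intro i
    have h1 := congrArg (fun v : Pt => v i) hs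
    have h2 : (midpoint ℝ P Pc) i = (2:ℝ)⁻¹ * (P i + Pc i) := by
      rw [midpoint_eq_smul_add]; simp; ring
    simp only [vsub_eq_sub, sub_app, smul_app] at h1
    rw [h2] at h1
    field_simp at h1
    linarith
  rw [inner_eq] at hinnc
  have hTc : s * ip (B - A) (B - A) = ip (P - A) (B - A) := by
    simp only [ip, sub_app] at hinnc ⊢
    rw [hPcv 0, hPcv 1] at hinnc
    linear_combination (1:ℝ)/2 * hinnc
  -- squared distances
  have e1 : dist Q Pb ^ 2 * ip (C - A) (C - A)
      = ip (Q - A + (P - A)) (Q - A + (P - A)) * ip (C - A) (C - A)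
        - 4 * ip (P - A) (C - A) * ip (Q - A) (C - A) := by
    rw [dist_sq, hPbv 0, hPbv 1]
    simp only [ip, sub_app, add_app] at hTb ⊢
    linear_combination (4 * ((1 - t) * ((C 0 - A 0)^2 + (C 1 - A 1)^2)
      - ((Q 0 - A 0) * (C 0 - A 0) + (Q 1 - A 1) * (C 1 - A 1)))) * hTb
  have e2 : dist Q Pc ^ 2 * ip (B - A) (B - A)
      = ip (Q - A + (P - A)) (Q - A + (P - A)) * ip (B - A) (B - A)
        - 4 * ip (P - A) (B - A) * ip (Q - A) (B - A) := by
    rw [dist_sq, hPcv 0, hPcv 1]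
    simp only [ip, sub_app, add_app] at hTc ⊢
    linear_combination (4 * (s * ((B 0 - A 0)^2 + (B 1 - A 1)^2)
      - ((Q 0 - A 0) * (B 0 - A 0) + (Q 1 - A 1) * (B 1 - A 1)))) * hTc
  have hNCpos : 0 < ip (C - A) (C - A) := by rw [← norm_sq]; positivity
  have hNBpos : 0 < ip (B - A) (B - A) := by rw [← norm_sq]; positivity
  have hsq : dist Q Pb ^ 2 * (ip (C - A) (C - A) * ip (B - A) (B - A))
      = dist Q Pc ^ 2 * (ip (C - A) (C - A) * ip (B - A) (B - A)) := by
    linear_combination (ip (B - A) (B - A)) * e1 - (ip (C - A) (C - A)) * e2 + 4 * key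
  have hsq2 : dist Q Pb ^ 2 = dist Q Pc ^ 2 :=
    mul_right_cancel₀ (by positivity) hsq
  calc dist Q Pb = Real.sqrt (dist Q Pb ^ 2) := (Real.sqrt_sq dist_nonneg).symm
    _ = Real.sqrt (dist Q Pc ^ 2) := by rw [hsq2]
    _ = dist Q Pc := Real.sqrt_sq dist_nonneg

end IsoRef

/-- Isogonal conjugate reflection lemma (triangle case): if `P` is an interior point of
triangle `ABC` and `Q` is its isogonal conjugate (`∠PAB = ∠QAC`, `∠PBC = ∠QBA`,
`∠PCA = ∠QCB`), then the reflections `Pa`, `Pb`, `Pc` of `P` over the side-lines `BC`,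
`CA`, `AB` (characterized by the midpoint lying on the line and the segment being
perpendicular to it) lie on a common circle centered at `Q`. -/
theorem isogonal_conjugate_reflections (A B C P Q Pa Pb Pc : EuclideanSpace ℝ (Fin 2))
    (hABC : AffineIndependent ℝ ![A, B, C])
    (hPin : P ∈ interior (convexHull ℝ ({A, B, C} : Set (EuclideanSpace ℝ (Fin 2)))))
    (hA : ∠ P A B = ∠ Q A C) (hB : ∠ P B C = ∠ Q B A) (hC : ∠ P C A = ∠ Q C B)
    (hPa : midpoint ℝ P Pa ∈ line[ℝ, B, C] ∧ inner ℝ (Pa - P) (C - B) = (0 : ℝ))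
    (hPb : midpoint ℝ P Pb ∈ line[ℝ, C, A] ∧ inner ℝ (Pb - P) (A - C) = (0 : ℝ))
    (hPc : midpoint ℝ P Pc ∈ line[ℝ, A, B] ∧ inner ℝ (Pc - P) (B - A) = (0 : ℝ)) :
    dist Q Pa = dist Q Pb ∧ dist Q Pb = dist Q Pc := by
  obtain ⟨α, β, γ, hα, hβ, hγ, hsum, hP⟩ := IsoRef.bary_of_interior hABC hPin
  have hD := IsoRef.D_ne hABC
  have hDB : IsoRef.crs (C - B) (A - B) ≠ 0 := by
    have h : IsoRef.crs (C - B) (A - B) = IsoRef.crs (B - A) (C - A) := by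
      simp only [IsoRef.crs, IsoRef.sub_app]; ring
    rw [h]; exact hD
  have hsumB : β + γ + α = 1 := by linarith
  have hPB : P = β • B + γ • C + α • A := by
    ext i
    rw [hP]
    simp only [IsoRef.add_app, IsoRef.smul_app]
    ring
  have gA := IsoRef.sign_master A B C P Q hD hα hβ hγ hsum hP hA hB hC
  have gB := IsoRef.sign_master B C A P Q hDB hβ hγ hα hsumB hPB hB hC hA
  have E1 : dist Q Pb = dist Q Pc :=
    IsoRef.dist_master A B C P Q Pb Pc hD hα hβ hγ hsum hP hA gA hPb hPc
  have E2 : dist Q Pc = dist Q Pa :=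
    IsoRef.dist_master B C A P Q Pc Pa hDB hβ hγ hα hsumB hPB hB gB hPc hPa
  exact ⟨E2.symm.trans E1.symm, E1⟩
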